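/- Let μ be a non-degenerate probability measure on Γ with finite second moment. For v ∈ ℝ^m, let u be the harmonic part in a harmonic decomposition v̂ = u + df, and set Q(v) := ∑_{x∈Δ}∑_{s∈Γ} c(x,s)·u(x,s)² − χ(u)². Then Q(v) ≥ 0 for every v ∈ ℝ^m, and Q(v) = 0 implies v = 0; that is, the associated covariance quadratic form is positive definite. -/
import Mathlib


open scoped BigOperators Classical
open Filter Matrix MeasureTheory

namespace NSVA

noncomputable section

/-- Convolution of two real-valued functions on a group. -/
def conv {G : Type*} [Group G] (μ ν : G → ℝ) : G → ℝ :=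
  fun g => ∑' h : G, μ h * ν (h⁻¹ * g)

/-- Convolution powers: `convPow μ 0 = δ_1`, `convPow μ (n+1) = (convPow μ n) * μ`. -/
def convPow {G : Type*} [Group G] (μ : G → ℝ) : ℕ → G → ℝ
  | 0 => fun g => if g = 1 then 1 else 0
  | n + 1 => conv (convPow μ n) μ

/-- A probability measure on a countable set, viewed as a function. -/
def IsProb {G : Type*} (μ : G → ℝ) : Prop := (∀ g, 0 ≤ μ g) ∧ HasSum μ 1

/-- The support of `μ` generates the group as a semigroup. -/
def Nondeg {G : Type*} [Group G] (μ : G → ℝ) : Prop :=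
  ∀ g : G, g ∈ Subsemigroup.closure {x : G | 0 < μ x}

/-- `μ` is aperiodic: `μ_n(1) > 0` for all large enough `n`. -/
def Aperiodic {G : Type*} [Group G] (μ : G → ℝ) : Prop :=
  ∃ N : ℕ, ∀ n : ℕ, N ≤ n → 0 < convPow μ n 1

/-- Total variation distance between two (probability) functions. -/
def tv {Z : Type*} (p q : Z → ℝ) : ℝ := (1 / 2) * ∑' z : Z, |p z - q z|

/-- Word length with respect to a finite set `S₀`. -/
def wordLength {G : Type*} [Group G] (S₀ : Finset G) (g : G) : ℕ :=
  sInf {n : ℕ | ∃ l : List G, (∀ s ∈ l, s ∈ S₀) ∧ l.length = n ∧ l.prod = g}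

/-- Finite second moment with respect to a word metric given by a finite symmetric
generating set. -/
def FinSecondMoment {G : Type*} [Group G] (μ : G → ℝ) : Prop :=
  ∃ S₀ : Finset G, (∀ s ∈ S₀, s⁻¹ ∈ S₀) ∧ Subgroup.closure (S₀ : Set G) = ⊤ ∧
    Summable (fun g : G => (wordLength S₀ g : ℝ) ^ 2 * μ g)

/-- A group is virtually abelian if it has an abelian subgroup of finite index. -/
def VirtAbelian (G : Type*) [Group G] : Prop :=
  ∃ A : Subgroup G, A.index ≠ 0 ∧ ∀ a b : A, a * b = b * a

/-- The noised measure `π^ρ` on `G × G`. -/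
def noised {G : Type*} (μ : G → ℝ) (ρ : ℝ) : G × G → ℝ :=
  fun p => ρ * μ p.1 * μ p.2 + (1 - ρ) * μ p.1 * (if p.1 = p.2 then 1 else 0)

/-- First marginal of a measure on a product. -/
def marg1 {G₁ G₂ : Type*} (ν : G₁ × G₂ → ℝ) : G₁ → ℝ := fun γ₁ => ∑' γ₂ : G₂, ν (γ₁, γ₂)

/-- Second marginal of a measure on a product. -/
def marg2 {G₁ G₂ : Type*} (ν : G₁ × G₂ → ℝ) : G₂ → ℝ := fun γ₂ => ∑' γ₁ : G₁, ν (γ₁, γ₂)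

/-- A system of representatives of the right cosets `Λ\Γ` containing the identity,
together with the representative map `rep`, constant on right cosets. -/
structure RepSystem {Γ : Type*} [Group Γ] (Λ : Subgroup Γ) where
  Δ : Finset Γ
  one_mem : (1 : Γ) ∈ Δ
  rep : Γ → Γ
  rep_mem : ∀ γ : Γ, rep γ ∈ Δ
  rep_spec : ∀ γ : Γ, γ * (rep γ)⁻¹ ∈ Λ
  rep_idem : ∀ x ∈ Δ, rep x = x
  rep_coset : ∀ γ : Γ, ∀ v ∈ Λ, rep (v * γ) = rep γ

variable {Γ : Type*} [Group Γ] {Λ : Subgroup Γ} {m : ℕ}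

/-- The cocycle `α(x,s) = ψ(x·s·(x^s)⁻¹) ∈ ℤ^m`. -/
def cocycle (ψ : Λ ≃* Multiplicative (Fin m → ℤ)) (R : RepSystem Λ) (x s : Γ) : Fin m → ℤ :=
  Multiplicative.toAdd (ψ ⟨x * s * (R.rep (x * s))⁻¹, R.rep_spec (x * s)⟩)

/-- The transfer homomorphism `θ(γ) = ∑_{x∈Δ} α(x,γ)`. -/
def transfer (ψ : Λ ≃* Multiplicative (Fin m → ℤ)) (R : RepSystem Λ) (γ : Γ) : Fin m → ℤ :=
  ∑ x ∈ R.Δ, cocycle ψ R x γ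

/-- `Φ(γ) = ψ(v)` where `γ = v·x`, `v ∈ Λ`, `x ∈ Δ`. -/
def Phi (ψ : Λ ≃* Multiplicative (Fin m → ℤ)) (R : RepSystem Λ) (γ : Γ) : Fin m → ℤ :=
  Multiplicative.toAdd (ψ ⟨γ * (R.rep γ)⁻¹, R.rep_spec γ⟩)

/-- A 1-form on the quotient diagram. -/
def IsOneForm (R : RepSystem Λ) (ω : Γ → Γ → ℝ) : Prop :=
  ∀ x ∈ R.Δ, ∀ s : Γ, ω (R.rep (x * s)) s⁻¹ = -ω x s

/-- `χ(ω) = ∑_{x∈Δ} ∑_s c(x,s)·ω(x,s)` where `c(x,s) = μ(s)/#F`. -/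
def chi (R : RepSystem Λ) (μ : Γ → ℝ) (ω : Γ → Γ → ℝ) : ℝ :=
  ∑ x ∈ R.Δ, ∑' s : Γ, μ s / (Λ.index : ℝ) * ω x s

/-- Square-integrability of a 1-form. -/
def SqInt (R : RepSystem Λ) (μ : Γ → ℝ) (ω : Γ → Γ → ℝ) : Prop :=
  ∀ x ∈ R.Δ, Summable (fun s : Γ => μ s / (Λ.index : ℝ) * ω x s ^ 2)

/-- Harmonicity of a (square-integrable) 1-form. -/
def Harmonic (R : RepSystem Λ) (μ : Γ → ℝ) (ω : Γ → Γ → ℝ) : Prop :=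
  SqInt R μ ω ∧ ∀ x ∈ R.Δ, (∑' s : Γ, μ s * ω x s) = chi R μ ω

/-- The differential `df(x,s) = f(x^s) − f(x)`. -/
def dd (R : RepSystem Λ) (f : Γ → ℝ) : Γ → Γ → ℝ := fun x s => f (R.rep (x * s)) - f x

/-- `(u, f)` is a harmonic decomposition of the 1-form `ω`: `ω = u + df` with `u`
a harmonic 1-form. -/
def IsHarmDecomp (R : RepSystem Λ) (μ : Γ → ℝ) (ω u : Γ → Γ → ℝ) (f : Γ → ℝ) : Prop :=
  IsOneForm R u ∧ Harmonic R μ u ∧ ∀ x ∈ R.Δ, ∀ s : Γ, ω x s = u x s + dd R f x s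

/-- The 1-form `v̂(x,s) = ⟨v, α(x,s)⟩` (standard inner product). -/
def vhat (ψ : Λ ≃* Multiplicative (Fin m → ℤ)) (R : RepSystem Λ) (v : Fin m → ℝ) :
    Γ → Γ → ℝ :=
  fun x s => ∑ i, v i * (cocycle ψ R x s i : ℝ)

/-- The 1-form `v̂(x,s) = B(v, α(x,s))` for a bilinear form `B`. -/
def vhatB (ψ : Λ ≃* Multiplicative (Fin m → ℤ)) (R : RepSystem Λ)
    (B : (Fin m → ℝ) →ₗ[ℝ] (Fin m → ℝ) →ₗ[ℝ] ℝ) (v : Fin m → ℝ) : Γ → Γ → ℝ :=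
  fun x s => B v (fun i => (cocycle ψ R x s i : ℝ))

/-- The drift `ζ = (1/#F)·∑_{x∈Δ}∑_s μ(s)·α(x,s) ∈ ℝ^m`. -/
def drift (ψ : Λ ≃* Multiplicative (Fin m → ℤ)) (R : RepSystem Λ) (μ : Γ → ℝ) : Fin m → ℝ :=
  fun i => (Λ.index : ℝ)⁻¹ * ∑ x ∈ R.Δ, ∑' s : Γ, μ s * (cocycle ψ R x s i : ℝ)

/-- The covariance pairing `∑_{x,s} c(x,s)·u(x,s)·u'(x,s) − χ(u)·χ(u')`. -/
def cov (R : RepSystem Λ) (μ : Γ → ℝ) (u u' : Γ → Γ → ℝ) : ℝ :=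
  (∑ x ∈ R.Δ, ∑' s : Γ, μ s / (Λ.index : ℝ) * (u x s * u' x s)) - chi R μ u * chi R μ u'

/-- The transfer operator `ℒ_v` acting on functions `Δ → ℂ`. -/
def transferOp (ψ : Λ ≃* Multiplicative (Fin m → ℤ)) (R : RepSystem Λ) (μ : Γ → ℝ)
    (v : Fin m → ℝ) (f : Γ → ℂ) : Γ → ℂ :=
  fun x => ∑' s : Γ, (μ s : ℂ) *
    Complex.exp (2 * Real.pi * Complex.I * ((∑ i, v i * (cocycle ψ R x s i : ℝ)) : ℝ)) *
    f (R.rep (x * s))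

/-- The Gaussian density `ξ_A(w)` associated with a (positive-definite) matrix `A`. -/
def gauss {d : ℕ} (A : Matrix (Fin d) (Fin d) ℝ) (w : Fin d → ℝ) : ℝ :=
  (2 * Real.pi) ^ (-(d : ℝ) / 2) * A.det ^ (-(1 : ℝ) / 2) *
    Real.exp (-(w ⬝ᵥ A⁻¹.mulVec w) / 2)

/-- The product representative system for `Λ₁ × Λ₂ ≤ Γ₁ × Γ₂`. -/
def prodRep {Γ₁ : Type*} [Group Γ₁] {Γ₂ : Type*} [Group Γ₂]
    {Λ₁ : Subgroup Γ₁} {Λ₂ : Subgroup Γ₂}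
    (R₁ : RepSystem Λ₁) (R₂ : RepSystem Λ₂) : RepSystem (Λ₁.prod Λ₂) where
  Δ := R₁.Δ ×ˢ R₂.Δ
  one_mem := Finset.mem_product.mpr ⟨R₁.one_mem, R₂.one_mem⟩
  rep := fun p => (R₁.rep p.1, R₂.rep p.2)
  rep_mem := fun p => Finset.mem_product.mpr ⟨R₁.rep_mem p.1, R₂.rep_mem p.2⟩
  rep_spec := fun p => Subgroup.mem_prod.mpr ⟨R₁.rep_spec p.1, R₂.rep_spec p.2⟩
  rep_idem := fun x hx => by
    rcases Finset.mem_product.mp hx with ⟨h1, h2⟩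
    exact Prod.ext_iff.mpr ⟨R₁.rep_idem x.1 h1, R₂.rep_idem x.2 h2⟩
  rep_coset := fun p v hv => by
    rcases Subgroup.mem_prod.mp hv with ⟨h1, h2⟩
    exact Prod.ext_iff.mpr ⟨R₁.rep_coset p.1 v.1 h1, R₂.rep_coset p.2 v.2 h2⟩

/-- The 1-form `𝐯̂(x,s) = ⟨𝐯, α(x,s)⟩` on a product, standard inner product. -/
def vhat2 {Γ₁ : Type*} [Group Γ₁] {Γ₂ : Type*} [Group Γ₂]
    {Λ₁ : Subgroup Γ₁} {Λ₂ : Subgroup Γ₂} {m₁ m₂ : ℕ}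
    (ψ₁ : Λ₁ ≃* Multiplicative (Fin m₁ → ℤ)) (R₁ : RepSystem Λ₁)
    (ψ₂ : Λ₂ ≃* Multiplicative (Fin m₂ → ℤ)) (R₂ : RepSystem Λ₂)
    (v : (Fin m₁ → ℝ) × (Fin m₂ → ℝ)) : (Γ₁ × Γ₂) → (Γ₁ × Γ₂) → ℝ :=
  fun x s => (∑ i, v.1 i * (cocycle ψ₁ R₁ x.1 s.1 i : ℝ)) +
    ∑ i, v.2 i * (cocycle ψ₂ R₂ x.2 s.2 i : ℝ)

/-- The 1-form `𝐯̂(x,s) = ⟨𝐯, α(x,s)⟩` on a product, orthogonal-sum of the two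
bilinear forms `B₁`, `B₂`. -/
def vhatB2 {Γ₁ : Type*} [Group Γ₁] {Γ₂ : Type*} [Group Γ₂]
    {Λ₁ : Subgroup Γ₁} {Λ₂ : Subgroup Γ₂} {m₁ m₂ : ℕ}
    (ψ₁ : Λ₁ ≃* Multiplicative (Fin m₁ → ℤ)) (R₁ : RepSystem Λ₁)
    (B₁ : (Fin m₁ → ℝ) →ₗ[ℝ] (Fin m₁ → ℝ) →ₗ[ℝ] ℝ)
    (ψ₂ : Λ₂ ≃* Multiplicative (Fin m₂ → ℤ)) (R₂ : RepSystem Λ₂)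
    (B₂ : (Fin m₂ → ℝ) →ₗ[ℝ] (Fin m₂ → ℝ) →ₗ[ℝ] ℝ)
    (v : (Fin m₁ → ℝ) × (Fin m₂ → ℝ)) : (Γ₁ × Γ₂) → (Γ₁ × Γ₂) → ℝ :=
  fun x s => B₁ v.1 (fun i => (cocycle ψ₁ R₁ x.1 s.1 i : ℝ)) +
    B₂ v.2 (fun i => (cocycle ψ₂ R₂ x.2 s.2 i : ℝ))

end

section Aux

variable {Γ : Type*} [Group Γ] {Λ : Subgroup Γ} {m : ℕ}

lemma rep_rep (R : RepSystem Λ) (x s t : Γ) :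
    R.rep (R.rep (x * s) * t) = R.rep (x * s * t) := by
  have h2 : R.rep (x * s) * (x * s)⁻¹ ∈ Λ := by
    have := inv_mem (R.rep_spec (x * s))
    simpa [_root_.mul_inv_rev] using this
  have h1 : R.rep (x * s) * t = (R.rep (x * s) * (x * s)⁻¹) * (x * s * t) := by group
  rw [h1, R.rep_coset _ _ h2]

lemma cocycle_mul (ψ : Λ ≃* Multiplicative (Fin m → ℤ)) (R : RepSystem Λ) (x s t : Γ) :
    cocycle ψ R x (s * t) = cocycle ψ R x s + cocycle ψ R (R.rep (x * s)) t := by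
  have h : (⟨x * (s * t) * (R.rep (x * (s * t)))⁻¹, R.rep_spec _⟩ : Λ)
      = (⟨x * s * (R.rep (x * s))⁻¹, R.rep_spec _⟩ : Λ) *
        (⟨R.rep (x * s) * t * (R.rep (R.rep (x * s) * t))⁻¹, R.rep_spec _⟩ : Λ) := by
    apply Subtype.ext
    show x * (s * t) * (R.rep (x * (s * t)))⁻¹
        = (x * s * (R.rep (x * s))⁻¹) * (R.rep (x * s) * t * (R.rep (R.rep (x * s) * t))⁻¹)
    rw [rep_rep, show x * (s * t) = x * s * t by group]
    group
  unfold cocycle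
  rw [h, _root_.map_mul, toAdd_mul]

lemma vhat_mul (ψ : Λ ≃* Multiplicative (Fin m → ℤ)) (R : RepSystem Λ) (v : Fin m → ℝ)
    (x s t : Γ) :
    vhat ψ R v x (s * t) = vhat ψ R v x s + vhat ψ R v (R.rep (x * s)) t := by
  unfold vhat
  rw [cocycle_mul]
  simp [mul_add, Finset.sum_add_distrib]

lemma card_delta (hN : Λ.Normal) (R : RepSystem Λ) : R.Δ.card = Λ.index := by
  have e : {x // x ∈ R.Δ} ≃ Γ ⧸ Λ :=
    { toFun := fun x => QuotientGroup.mk x.1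
      invFun := Quotient.lift (fun γ => (⟨R.rep γ, R.rep_mem γ⟩ : {x // x ∈ R.Δ}))
        (by
          intro a b hab
          have h : a⁻¹ * b ∈ Λ := QuotientGroup.leftRel_apply.mp hab
          have h2 : a * (a⁻¹ * b) * a⁻¹ ∈ Λ := hN.conj_mem _ h a
          have hb : b = (a * (a⁻¹ * b) * a⁻¹) * a := by group
          have hr : R.rep b = R.rep a := by rw [hb, R.rep_coset a _ h2]
          exact Subtype.ext hr.symm)
      left_inv := fun x => Subtype.ext (R.rep_idem x.1 x.2)
      right_inv := by
        refine Quotient.ind (fun γ => ?_)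
        show QuotientGroup.mk (R.rep γ) = QuotientGroup.mk γ
        refine (QuotientGroup.eq).mpr ?_
        have hw : (R.rep γ)⁻¹ * (γ * (R.rep γ)⁻¹) * (R.rep γ)⁻¹⁻¹ ∈ Λ :=
          hN.conj_mem _ (R.rep_spec γ) (R.rep γ)⁻¹
        simpa [mul_assoc] using hw }
  rw [← Nat.card_eq_finsetCard, Nat.card_congr e]
  rfl

end Aux

/-- The covariance quadratic form
`Q(v) = ∑_{x,s} c(x,s)·u(x,s)² − χ(u)²` (with `u` the harmonic part of `v̂`) is
positive definite. -/
theorem covariance_posdef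
    {Γ : Type*} [Group Γ] [Countable Γ] {Λ : Subgroup Γ} (hN : Λ.Normal)
    (hI : Λ.index ≠ 0) {m : ℕ} (hm : 1 ≤ m) (ψ : Λ ≃* Multiplicative (Fin m → ℤ))
    (R : RepSystem Λ) (μ : Γ → ℝ) (hμ : IsProb μ) (hnd : Nondeg μ)
    (hmom : FinSecondMoment μ) :
    ∀ (v : Fin m → ℝ) (u : Γ → Γ → ℝ) (f : Γ → ℝ),
      IsHarmDecomp R μ (vhat ψ R v) u f →
      0 ≤ (∑ x ∈ R.Δ, ∑' s : Γ, μ s / (Λ.index : ℝ) * u x s ^ 2) - chi R μ u ^ 2 ∧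
      ((∑ x ∈ R.Δ, ∑' s : Γ, μ s / (Λ.index : ℝ) * u x s ^ 2) - chi R μ u ^ 2 = 0 →
        v = 0)    := by
  intro v u f hdec
  obtain ⟨hone, ⟨hsq, hharm⟩, hsumdec⟩ := hdec
  set F : ℝ := (Λ.index : ℝ) with hFdef
  have hF0 : 0 < F := by
    have : 0 < Λ.index := Nat.pos_of_ne_zero hI
    rw [hFdef]
    exact_mod_cast this
  set χ : ℝ := chi R μ u with hχ
  have hμs : Summable μ := hμ.2.summable
  have hc : Summable (fun s : Γ => μ s / F) := hμs.div_const F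
  have hcnn : ∀ s : Γ, 0 ≤ μ s / F := fun s => div_nonneg (hμ.1 s) hF0.le
  have htc : ∑' s : Γ, μ s / F = 1 / F := by
    rw [tsum_div_const, hμ.2.tsum_eq]
  have hcard : (R.Δ.card : ℝ) = F := by
    rw [card_delta hN R]
  -- summability facts
  have h1 : ∀ x ∈ R.Δ, Summable (fun s : Γ => μ s / F * u x s) := by
    intro x hx
    refine Summable.of_abs ?_
    refine Summable.of_nonneg_of_le (fun s => abs_nonneg _) (fun s => ?_)
      ((hsq x hx).add hc)
    have h1 : |μ s / F * u x s| = μ s / F * |u x s| := by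
      rw [abs_mul, abs_of_nonneg (hcnn s)]
    have h2 : |u x s| ≤ u x s ^ 2 + 1 := by
      nlinarith [abs_nonneg (u x s), sq_abs (u x s)]
    calc |μ s / F * u x s| = μ s / F * |u x s| := h1
      _ ≤ μ s / F * (u x s ^ 2 + 1) := by
          exact mul_le_mul_of_nonneg_left h2 (hcnn s)
      _ = μ s / F * u x s ^ 2 + μ s / F := by ring
  have h3 : ∀ x ∈ R.Δ, Summable (fun s : Γ => μ s / F * (u x s - χ) ^ 2) := by
    intro x hx
    have := ((hsq x hx).sub ((h1 x hx).mul_left (2 * χ))).add (hc.mul_left (χ ^ 2))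
    refine this.congr (fun s => ?_)
    ring
  have hTval : ∀ x ∈ R.Δ, (∑' s : Γ, μ s / F * (u x s - χ) ^ 2)
      = (∑' s : Γ, μ s / F * u x s ^ 2)
        - 2 * χ * (∑' s : Γ, μ s / F * u x s) + χ ^ 2 * (1 / F) := by
    intro x hx
    have e1 : (fun s : Γ => μ s / F * (u x s - χ) ^ 2)
        = fun s : Γ => (μ s / F * u x s ^ 2 - 2 * χ * (μ s / F * u x s))
            + χ ^ 2 * (μ s / F) := by
      funext s; ring
    rw [e1, Summable.tsum_add (((hsq x hx).sub ((h1 x hx).mul_left (2 * χ)))) (hc.mul_left (χ ^ 2)),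
      Summable.tsum_sub (hsq x hx) ((h1 x hx).mul_left (2 * χ)), tsum_mul_left, tsum_mul_left, htc]
  have hB : ∑ x ∈ R.Δ, (∑' s : Γ, μ s / F * u x s) = χ := by
    rw [hχ]; rfl
  have hQ : (∑ x ∈ R.Δ, ∑' s : Γ, μ s / F * u x s ^ 2) - χ ^ 2
      = ∑ x ∈ R.Δ, ∑' s : Γ, μ s / F * (u x s - χ) ^ 2 := by
    rw [Finset.sum_congr rfl hTval, Finset.sum_add_distrib, Finset.sum_sub_distrib,
      ← Finset.mul_sum, hB, Finset.sum_const, nsmul_eq_mul]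
    rw [hcard]
    field_simp
    ring
  have hQnn : 0 ≤ ∑ x ∈ R.Δ, ∑' s : Γ, μ s / F * (u x s - χ) ^ 2 :=
    Finset.sum_nonneg (fun x _ => tsum_nonneg (fun s => mul_nonneg (hcnn s) (sq_nonneg _)))
  constructor
  · linarith [hQ, hQnn]
  · intro h0
    -- each u x s = χ on the support of μ
    have hzero : ∑ x ∈ R.Δ, ∑' s : Γ, μ s / F * (u x s - χ) ^ 2 = 0 := by
      linarith [hQ]
    have hux : ∀ x ∈ R.Δ, ∀ s : Γ, 0 < μ s → u x s = χ := by
      intro x hx s hs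
      have hTx : (∑' s : Γ, μ s / F * (u x s - χ) ^ 2) = 0 := by
        have := (Finset.sum_eq_zero_iff_of_nonneg (fun x _ =>
          tsum_nonneg (fun s => mul_nonneg (hcnn s) (sq_nonneg _)))).mp hzero x hx
        exact this
      have hle : μ s / F * (u x s - χ) ^ 2 ≤ 0 := by
        calc μ s / F * (u x s - χ) ^ 2
            ≤ ∑' t : Γ, μ t / F * (u x t - χ) ^ 2 :=
              Summable.le_tsum (h3 x hx) s (fun t _ => mul_nonneg (hcnn t) (sq_nonneg _))
          _ = 0 := hTx
      have heq : μ s / F * (u x s - χ) ^ 2 = 0 :=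
        le_antisymm hle (mul_nonneg (hcnn s) (sq_nonneg _))
      have hcpos : 0 < μ s / F := div_pos hs hF0
      have : (u x s - χ) ^ 2 = 0 := by
        rcases mul_eq_zero.mp heq with h | h
        · exact absurd h hcpos.ne'
        · exact h
      have := (pow_eq_zero_iff two_ne_zero).mp this
      linarith [this]
    -- base case: vhat on support letters
    have hbase : ∀ x ∈ R.Δ, ∀ s : Γ, 0 < μ s →
        vhat ψ R v x s = χ + (f (R.rep (x * s)) - f x) := by
      intro x hx s hs
      rw [hsumdec x hx s, hux x hx s hs]
      rfl
    -- induction over the semigroup closure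
    have hkey : ∀ γ : Γ, γ ∈ Subsemigroup.closure {x : Γ | 0 < μ x} →
        ∀ x ∈ R.Δ, ∃ n : ℕ, 1 ≤ n ∧
          vhat ψ R v x γ = n * χ + (f (R.rep (x * γ)) - f x) := by
      intro γ hγ
      induction hγ using Subsemigroup.closure_induction with
      | mem s hs =>
          intro x hx
          exact ⟨1, le_refl 1, by rw [hbase x hx s hs]; push_cast; ring⟩
      | mul a b ha hb iha ihb =>
          intro x hx
          obtain ⟨n₁, hn₁, e₁⟩ := iha x hx
          obtain ⟨n₂, hn₂, e₂⟩ := ihb (R.rep (x * a)) (R.rep_mem _)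
          refine ⟨n₁ + n₂, le_trans hn₁ (Nat.le_add_right _ _), ?_⟩
          rw [vhat_mul, e₁, e₂, rep_rep, ← mul_assoc]
          push_cast
          ring
    -- evaluate at elements of Λ
    have hL : ∀ a : Fin m → ℤ, ∃ n : ℕ, 1 ≤ n ∧ (∑ i, v i * (a i : ℝ)) = n * χ := by
      intro a
      set γ : Λ := ψ.symm (Multiplicative.ofAdd a) with hγdef
      obtain ⟨n, hn, e⟩ := hkey (γ : Γ) (hnd (γ : Γ)) 1 R.one_mem
      have hrep : R.rep ((1 : Γ) * (γ : Γ)) = 1 := by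
        rw [one_mul]
        have := R.rep_coset 1 (γ : Γ) γ.2
        rw [mul_one] at this
        rw [this, R.rep_idem 1 R.one_mem]
      have hco : cocycle ψ R 1 (γ : Γ) = a := by
        unfold cocycle
        have hel : (⟨(1 : Γ) * (γ : Γ) * (R.rep ((1 : Γ) * (γ : Γ)))⁻¹,
            R.rep_spec _⟩ : Λ) = γ := by
          apply Subtype.ext
          show (1 : Γ) * (γ : Γ) * (R.rep ((1 : Γ) * (γ : Γ)))⁻¹ = (γ : Γ)
          rw [hrep]
          group
        rw [hel, hγdef]
        simp
      refine ⟨n, hn, ?_⟩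
      have hv : vhat ψ R v 1 (γ : Γ) = ∑ i, v i * (a i : ℝ) := by
        unfold vhat
        rw [hco]
      rw [← hv, e, hrep]
      ring
    have hχ0 : χ = 0 := by
      obtain ⟨n, hn, e⟩ := hL 0
      have : (0 : ℝ) = n * χ := by
        simpa using e
      have hnpos : (0 : ℝ) < n := by exact_mod_cast hn
      nlinarith
    have hLa : ∀ a : Fin m → ℤ, (∑ i, v i * (a i : ℝ)) = 0 := by
      intro a
      obtain ⟨n, hn, e⟩ := hL a
      rw [hχ0] at e
      simpa using e
    funext i
    have := hLa (Pi.single i 1)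
    simpa [Pi.single_apply, Finset.sum_ite_eq'] using this


end NSVA
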